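/- There exist absolute constants C, c > 0 such that the following holds. Let q ≡ 3 (mod 4) be a prime power and let X be a subset of the paraboloid P ⊂ F_q³. If |X| ≥ C·q^{5/3}, then the number of non-trivial energy tuples in X satisfies E⁺_nt(X) ≥ c·|X|⁴/q³. -/

import Mathlib

/-- The paraboloid `z = x² + y²` in `F³`. -/
def Paraboloid (F : Type) [Field F] : Set (F × F × F) :=
  {p | p.2.2 = p.1 ^ 2 + p.2.1 ^ 2}

/-- `(a, b, c, d)` is a non-trivial energy tuple: `a + b = c + d` and `a, b, c, d`
are pairwise distinct. -/
def IsNontrivialEnergyTuple {F : Type} [Field F] (a b c d : F × F × F) : Prop :=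
  a + b = c + d ∧ a ≠ b ∧ a ≠ c ∧ a ≠ d ∧ b ≠ c ∧ b ≠ d ∧ c ≠ d

theorem stmt_0 :
    ∃ C c : ℝ, 0 < C ∧ 0 < c ∧
      ∀ (F : Type) [Field F] [Fintype F],
        Fintype.card F % 4 = 3 →
        ∀ X : Set (F × F × F), X ⊆ Paraboloid F →
          C * (Fintype.card F : ℝ) ^ ((5 : ℝ) / 3) ≤ (X.ncard : ℝ) →
          c * (X.ncard : ℝ) ^ 4 / (Fintype.card F : ℝ) ^ 3 ≤
            (Set.ncard {t : (F × F × F) × (F × F × F) × (F × F × F) × (F × F × F) |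
              t.1 ∈ X ∧ t.2.1 ∈ X ∧ t.2.2.1 ∈ X ∧ t.2.2.2 ∈ X ∧
              IsNontrivialEnergyTuple t.1 t.2.1 t.2.2.1 t.2.2.2} : ℝ) := by
  classical
  refine ⟨4, 1/2, by norm_num, by norm_num, ?_⟩
  intro F _ _ hq4 X _ hX
  set q : ℕ := Fintype.card F with hqdef
  have hq1 : (1 : ℝ) ≤ (q : ℝ) := by
    exact_mod_cast Nat.one_le_iff_ne_zero.2 Fintype.card_ne_zero
  -- Finset versions
  have hXfin : X.Finite := Set.toFinite X
  set Xf : Finset (F × F × F) := hXfin.toFinset with hXf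
  have hmem : ∀ v : F × F × F, v ∈ Xf ↔ v ∈ X := fun v => hXfin.mem_toFinset
  set n : ℕ := Xf.card with hn
  have hncard : X.ncard = n := Set.ncard_eq_toFinset_card X hXfin
  -- the energy tuple finset
  set T : Finset ((F × F × F) × (F × F × F) × (F × F × F) × (F × F × F)) :=
    Finset.univ.filter (fun t => t.1 ∈ Xf ∧ t.2.1 ∈ Xf ∧ t.2.2.1 ∈ Xf ∧ t.2.2.2 ∈ Xf ∧
      t.1 + t.2.1 = t.2.2.1 + t.2.2.2) with hT
  have hmemT : ∀ t : (F × F × F) × (F × F × F) × (F × F × F) × (F × F × F), t ∈ T ↔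
      (t.1 ∈ Xf ∧ t.2.1 ∈ Xf ∧ t.2.2.1 ∈ Xf ∧ t.2.2.2 ∈ Xf ∧
        t.1 + t.2.1 = t.2.2.1 + t.2.2.2) := by
    intro t; simp [hT]
  -- the nontrivial energy tuple finset
  set S : Finset ((F × F × F) × (F × F × F) × (F × F × F) × (F × F × F)) :=
    Finset.univ.filter (fun t => t.1 ∈ X ∧ t.2.1 ∈ X ∧ t.2.2.1 ∈ X ∧ t.2.2.2 ∈ X ∧
      IsNontrivialEnergyTuple t.1 t.2.1 t.2.2.1 t.2.2.2) with hS
  have hScard : ({t : (F × F × F) × (F × F × F) × (F × F × F) × (F × F × F) |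
      t.1 ∈ X ∧ t.2.1 ∈ X ∧ t.2.2.1 ∈ X ∧ t.2.2.2 ∈ X ∧
      IsNontrivialEnergyTuple t.1 t.2.1 t.2.2.1 t.2.2.2} : Set _).ncard = S.card := by
    rw [← Set.ncard_coe_finset]
    congr 1
    ext t
    simp [hS]
  -- the representation function
  set r : F × F × F → ℕ :=
    fun s => ((Xf ×ˢ Xf).filter (fun p => p.1 + p.2 = s)).card with hr
  -- total count of pairs
  have hsum_r : ∑ s : F × F × F, r s = n * n := by
    rw [hn, ← Finset.card_product Xf Xf]
    exact (Finset.card_eq_sum_card_fiberwise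
      (f := fun p : (F × F × F) × (F × F × F) => p.1 + p.2)
      (t := Finset.univ) (fun x _ => Finset.mem_univ _)).symm
  -- energy equals sum of squares of r
  have hT_card : T.card = ∑ s : F × F × F, (r s) ^ 2 := by
    rw [Finset.card_eq_sum_card_fiberwise
      (f := fun t : (F × F × F) × (F × F × F) × (F × F × F) × (F × F × F) => t.1 + t.2.1)
      (t := Finset.univ) (fun x _ => Finset.mem_univ _)]
    refine Finset.sum_congr rfl (fun s _ => ?_)
    rw [sq, hr, ← Finset.card_product]
    refine Finset.card_nbij' (fun t => ((t.1, t.2.1), (t.2.2.1, t.2.2.2)))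
      (fun p => (p.1.1, p.1.2, p.2.1, p.2.2)) ?_ ?_ ?_ ?_
    · rintro ⟨a, b, c, d⟩ ht
      simp only [Finset.mem_coe, Finset.mem_filter, hmemT] at ht
      obtain ⟨⟨ha, hb, hc, hd, habcd⟩, hs⟩ := ht
      simp only [Finset.mem_coe, Finset.mem_product, Finset.mem_filter]
      exact ⟨⟨⟨ha, hb⟩, hs⟩, ⟨⟨hc, hd⟩, by rw [← habcd]; exact hs⟩⟩
    · rintro ⟨⟨a, b⟩, ⟨c, d⟩⟩ hp
      simp only [Finset.mem_coe, Finset.mem_product, Finset.mem_filter] at hp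
      obtain ⟨⟨⟨ha, hb⟩, hab⟩, ⟨⟨hc, hd⟩, hcd⟩⟩ := hp
      simp only [Finset.mem_coe, Finset.mem_filter, hmemT, Finset.mem_univ, true_and]
      exact ⟨⟨ha, hb, hc, hd, by rw [hab, hcd]⟩, hab⟩
    · rintro ⟨a, b, c, d⟩ _; rfl
    · rintro ⟨⟨a, b⟩, ⟨c, d⟩⟩ _; rfl
  -- Cauchy-Schwarz
  have hCS : n ^ 4 ≤ q ^ 3 * T.card := by
    have h := sq_sum_le_card_mul_sum_sq (s := (Finset.univ : Finset (F × F × F))) (f := r)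
    rw [hsum_r] at h
    have hcardV : (Finset.univ : Finset (F × F × F)).card = q ^ 3 := by
      simp [hqdef, Fintype.card_prod]; ring
    rw [hcardV] at h
    calc n ^ 4 = (n * n) ^ 2 := by ring
    _ ≤ q ^ 3 * ∑ s : F × F × F, (r s) ^ 2 := h
    _ = q ^ 3 * T.card := by rw [hT_card]
  -- degenerate tuples: each class injects into Xf ×ˢ Xf
  have hdegcard : ∀ D : Finset ((F × F × F) × (F × F × F) × (F × F × F) × (F × F × F)),
      D ⊆ T → (∀ t₁ ∈ D, ∀ t₂ ∈ D, t₁.1 = t₂.1 → t₁.2.2.1 = t₂.2.2.1 → t₁ = t₂) →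
      D.card ≤ n ^ 2 := by
    intro D hDT hinj
    rw [sq, hn, ← Finset.card_product]
    apply Finset.card_le_card_of_injOn (fun t => (t.1, t.2.2.1))
    · intro t ht
      have := (hmemT t).1 (hDT ht)
      exact Finset.mem_product.2 ⟨this.1, this.2.2.1⟩
    · intro t₁ h₁ t₂ h₂ h
      simp only [Prod.mk.injEq] at h
      exact hinj t₁ h₁ t₂ h₂ h.1 h.2
  have hdegcard' : ∀ D : Finset ((F × F × F) × (F × F × F) × (F × F × F) × (F × F × F)),
      D ⊆ T → (∀ t₁ ∈ D, ∀ t₂ ∈ D, t₁.1 = t₂.1 → t₁.2.1 = t₂.2.1 → t₁ = t₂) →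
      D.card ≤ n ^ 2 := by
    intro D hDT hinj
    rw [sq, hn, ← Finset.card_product]
    apply Finset.card_le_card_of_injOn (fun t => (t.1, t.2.1))
    · intro t ht
      have := (hmemT t).1 (hDT ht)
      exact Finset.mem_product.2 ⟨this.1, this.2.1⟩
    · intro t₁ h₁ t₂ h₂ h
      simp only [Prod.mk.injEq] at h
      exact hinj t₁ h₁ t₂ h₂ h.1 h.2
  -- bound: T.card ≤ S.card + 6 * n^2
  have hsplit : T.card ≤ S.card + 6 * n ^ 2 := by
    set Dab := T.filter (fun t => t.1 = t.2.1) with hDab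
    set Dcd := T.filter (fun t => t.2.2.1 = t.2.2.2) with hDcd
    set Dac := T.filter (fun t => t.1 = t.2.2.1) with hDac
    set Dad := T.filter (fun t => t.1 = t.2.2.2) with hDad
    set Dbc := T.filter (fun t => t.2.1 = t.2.2.1) with hDbc
    set Dbd := T.filter (fun t => t.2.1 = t.2.2.2) with hDbd
    have hsub : T ⊆ S ∪ Dab ∪ Dcd ∪ Dac ∪ Dad ∪ Dbc ∪ Dbd := by
      intro t ht
      have htm := (hmemT t).1 ht
      simp only [Finset.mem_union, hDab, hDcd, hDac, hDad, hDbc, hDbd, hS,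
        Finset.mem_filter, Finset.mem_univ, true_and]
      by_cases hab : t.1 = t.2.1
      · exact Or.inl (Or.inl (Or.inl (Or.inl (Or.inl (Or.inr ⟨ht, hab⟩)))))
      by_cases hcd : t.2.2.1 = t.2.2.2
      · exact Or.inl (Or.inl (Or.inl (Or.inl (Or.inr ⟨ht, hcd⟩))))
      by_cases hac : t.1 = t.2.2.1
      · exact Or.inl (Or.inl (Or.inl (Or.inr ⟨ht, hac⟩)))
      by_cases had : t.1 = t.2.2.2
      · exact Or.inl (Or.inl (Or.inr ⟨ht, had⟩))
      by_cases hbc : t.2.1 = t.2.2.1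
      · exact Or.inl (Or.inr ⟨ht, hbc⟩)
      by_cases hbd : t.2.1 = t.2.2.2
      · exact Or.inr ⟨ht, hbd⟩
      · refine Or.inl (Or.inl (Or.inl (Or.inl (Or.inl (Or.inl ?_)))))
        exact ⟨(hmem _).1 htm.1, (hmem _).1 htm.2.1, (hmem _).1 htm.2.2.1,
          (hmem _).1 htm.2.2.2.1, htm.2.2.2.2, hab, hac, had, hbc, hbd, hcd⟩
    have hDabc : Dab.card ≤ n ^ 2 := by
      apply hdegcard _ (Finset.filter_subset _ _)
      rintro ⟨a₁, b₁, c₁, d₁⟩ h₁ ⟨a₂, b₂, c₂, d₂⟩ h₂ ha hc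
      simp only [hDab, Finset.mem_filter, hmemT] at h₁ h₂
      obtain ⟨⟨_, _, _, _, he₁⟩, hab₁⟩ := h₁
      obtain ⟨⟨_, _, _, _, he₂⟩, hab₂⟩ := h₂
      simp only at ha hc hab₁ hab₂ he₁ he₂
      subst ha hc hab₁
      have he₂' : a₁ + a₁ = c₁ + d₂ := by nth_rewrite 2 [hab₂]; exact he₂
      have hd : d₁ = d₂ := add_left_cancel (he₁.symm.trans he₂')
      simp [hd, ← hab₂]
    have hDcdc : Dcd.card ≤ n ^ 2 := by
      apply hdegcard _ (Finset.filter_subset _ _)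
      rintro ⟨a₁, b₁, c₁, d₁⟩ h₁ ⟨a₂, b₂, c₂, d₂⟩ h₂ ha hc
      simp only [hDcd, Finset.mem_filter, hmemT] at h₁ h₂
      obtain ⟨⟨_, _, _, _, he₁⟩, hcd₁⟩ := h₁
      obtain ⟨⟨_, _, _, _, he₂⟩, hcd₂⟩ := h₂
      simp only at ha hc hcd₁ hcd₂ he₁ he₂
      subst ha hc hcd₁
      have he₂' : a₁ + b₂ = c₁ + c₁ := by nth_rewrite 2 [hcd₂]; exact he₂
      have hb : b₁ = b₂ := add_left_cancel (he₁.trans he₂'.symm)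
      simp [hb, ← hcd₂]
    have hDacc : Dac.card ≤ n ^ 2 := by
      apply hdegcard' _ (Finset.filter_subset _ _)
      rintro ⟨a₁, b₁, c₁, d₁⟩ h₁ ⟨a₂, b₂, c₂, d₂⟩ h₂ ha hb
      simp only [hDac, Finset.mem_filter, hmemT] at h₁ h₂
      obtain ⟨⟨_, _, _, _, he₁⟩, hac₁⟩ := h₁
      obtain ⟨⟨_, _, _, _, he₂⟩, hac₂⟩ := h₂
      simp only at ha hb hac₁ hac₂ he₁ he₂
      subst ha hb hac₁
      rw [← hac₂] at he₂ ⊢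
      have : d₁ = d₂ := add_left_cancel (he₁.symm.trans he₂)
      simp [this]
    have hDadc : Dad.card ≤ n ^ 2 := by
      apply hdegcard' _ (Finset.filter_subset _ _)
      rintro ⟨a₁, b₁, c₁, d₁⟩ h₁ ⟨a₂, b₂, c₂, d₂⟩ h₂ ha hb
      simp only [hDad, Finset.mem_filter, hmemT] at h₁ h₂
      obtain ⟨⟨_, _, _, _, he₁⟩, had₁⟩ := h₁
      obtain ⟨⟨_, _, _, _, he₂⟩, had₂⟩ := h₂
      simp only at ha hb had₁ had₂ he₁ he₂
      subst ha hb had₁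
      rw [← had₂] at he₂ ⊢
      have hc : c₁ = c₂ := by
        have e₁ : c₁ = b₁ := by
          have : a₁ + b₁ = a₁ + c₁ := by rw [he₁]; ring
          exact (add_left_cancel this).symm
        have e₂ : c₂ = b₁ := by
          have : a₁ + b₁ = a₁ + c₂ := by rw [he₂]; ring
          exact (add_left_cancel this).symm
        rw [e₁, e₂]
      simp [hc]
    have hDbcc : Dbc.card ≤ n ^ 2 := by
      apply hdegcard' _ (Finset.filter_subset _ _)
      rintro ⟨a₁, b₁, c₁, d₁⟩ h₁ ⟨a₂, b₂, c₂, d₂⟩ h₂ ha hb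
      simp only [hDbc, Finset.mem_filter, hmemT] at h₁ h₂
      obtain ⟨⟨_, _, _, _, he₁⟩, hbc₁⟩ := h₁
      obtain ⟨⟨_, _, _, _, he₂⟩, hbc₂⟩ := h₂
      simp only at ha hb hbc₁ hbc₂ he₁ he₂
      subst ha hb hbc₁
      rw [← hbc₂] at he₂ ⊢
      have hd : d₁ = d₂ := by
        have e₁ : d₁ = a₁ := by
          have : b₁ + a₁ = b₁ + d₁ := by rw [add_comm b₁ a₁, he₁]
          exact (add_left_cancel this).symm
        have e₂ : d₂ = a₁ := by
          have : b₁ + a₁ = b₁ + d₂ := by rw [add_comm b₁ a₁, he₂]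
          exact (add_left_cancel this).symm
        rw [e₁, e₂]
      simp [hd]
    have hDbdc : Dbd.card ≤ n ^ 2 := by
      apply hdegcard' _ (Finset.filter_subset _ _)
      rintro ⟨a₁, b₁, c₁, d₁⟩ h₁ ⟨a₂, b₂, c₂, d₂⟩ h₂ ha hb
      simp only [hDbd, Finset.mem_filter, hmemT] at h₁ h₂
      obtain ⟨⟨_, _, _, _, he₁⟩, hbd₁⟩ := h₁
      obtain ⟨⟨_, _, _, _, he₂⟩, hbd₂⟩ := h₂
      simp only at ha hb hbd₁ hbd₂ he₁ he₂
      subst ha hb hbd₁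
      rw [← hbd₂] at he₂ ⊢
      have hc : c₁ = c₂ := by
        have e₁ : c₁ = a₁ := by
          have : b₁ + a₁ = b₁ + c₁ := by
            rw [add_comm b₁ a₁, he₁, add_comm]
          exact (add_left_cancel this).symm
        have e₂ : c₂ = a₁ := by
          have : b₁ + a₁ = b₁ + c₂ := by
            rw [add_comm b₁ a₁, he₂, add_comm]
          exact (add_left_cancel this).symm
        rw [e₁, e₂]
      simp [hc]
    calc T.card ≤ (S ∪ Dab ∪ Dcd ∪ Dac ∪ Dad ∪ Dbc ∪ Dbd).card :=
        Finset.card_le_card hsub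
      _ ≤ S.card + Dab.card + Dcd.card + Dac.card + Dad.card + Dbc.card + Dbd.card := by
        refine le_trans (Finset.card_union_le _ _) ?_
        gcongr ?_ + _
        refine le_trans (Finset.card_union_le _ _) ?_
        gcongr ?_ + _
        refine le_trans (Finset.card_union_le _ _) ?_
        gcongr ?_ + _
        refine le_trans (Finset.card_union_le _ _) ?_
        gcongr ?_ + _
        refine le_trans (Finset.card_union_le _ _) ?_
        gcongr ?_ + _
        exact Finset.card_union_le _ _
      _ ≤ S.card + 6 * n ^ 2 := by omega
  -- final arithmetic
  have hq3 : (0 : ℝ) < (q : ℝ) ^ 3 := by positivity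
  rw [hScard, hncard]
  rw [hncard] at hX
  have hq53 : (0:ℝ) ≤ (q : ℝ) ^ ((5:ℝ)/3) := Real.rpow_nonneg (by linarith) _
  have hn2 : 16 * (q : ℝ) ^ 3 ≤ (n : ℝ) ^ 2 := by
    have h1 : (4 * (q : ℝ) ^ ((5:ℝ)/3)) ^ 2 ≤ (n : ℝ) ^ 2 := by
      have hnn : (0:ℝ) ≤ (n:ℝ) := Nat.cast_nonneg n
      apply sq_le_sq' (by linarith) hX
    have h2 : ((q : ℝ) ^ ((5:ℝ)/3)) ^ 2 = (q : ℝ) ^ ((10:ℝ)/3) := by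
      rw [← Real.rpow_natCast ((q:ℝ) ^ ((5:ℝ)/3)) 2, ← Real.rpow_mul (by linarith)]
      norm_num
    have h3 : (q : ℝ) ^ (3:ℝ) ≤ (q : ℝ) ^ ((10:ℝ)/3) :=
      Real.rpow_le_rpow_of_exponent_le hq1 (by norm_num)
    have h4 : (q : ℝ) ^ (3:ℝ) = (q : ℝ) ^ (3:ℕ) := by
      rw [show ((3:ℝ)) = ((3:ℕ):ℝ) by norm_num, Real.rpow_natCast]
    have h1' : 16 * ((q:ℝ) ^ ((5:ℝ)/3))^2 ≤ (n:ℝ)^2 := by nlinarith [h1]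
    calc 16 * (q:ℝ)^3 = 16 * (q:ℝ)^(3:ℝ) := by rw [h4]
      _ ≤ 16 * (q:ℝ)^((10:ℝ)/3) := by linarith
      _ = 16 * ((q:ℝ)^((5:ℝ)/3))^2 := by rw [h2]
      _ ≤ (n:ℝ)^2 := h1'
  have hCSR : (n : ℝ) ^ 4 ≤ (q : ℝ) ^ 3 * (T.card : ℝ) := by exact_mod_cast hCS
  have hsplitR : (T.card : ℝ) ≤ (S.card : ℝ) + 6 * (n : ℝ) ^ 2 := by exact_mod_cast hsplit
  rw [div_le_iff₀ hq3]
  have e1 : (q:ℝ)^3 * (T.card : ℝ) ≤ (q:ℝ)^3 * ((S.card : ℝ) + 6 * (n:ℝ)^2) :=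
    mul_le_mul_of_nonneg_left hsplitR (le_of_lt hq3)
  have e2 : 16 * (q:ℝ)^3 * (n:ℝ)^2 ≤ (n:ℝ)^2 * (n:ℝ)^2 :=
    mul_le_mul_of_nonneg_right hn2 (sq_nonneg ((n:ℝ)))
  nlinarith [hCSR, e1, e2, sq_nonneg ((n:ℝ))]
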